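/- Let T be a unilateral weighted right shift on ℓ^p(ℕ), 1 ≤ p < ∞, with bounded positive weight sequence (ω_n), i.e. T(x₁, x₂, …) = (0, ω₁x₁, ω₂x₂, …). If c(T) = lim inf_{n→∞} (ω₁⋯ω_n)^{1/n} = 0, then the descent spectrum of T coincides with its essential descent spectrum: σ_desc(T) = σ_desc^e(T). -/

import Mathlib

noncomputable section

variable {X : Type*} [NormedAddCommGroup X] [NormedSpace ℂ X]

/-- `T - λ·I`. -/
def shiftOp (T : X →L[ℂ] X) (l : ℂ) : X →L[ℂ] X := T - l • (1 : X →L[ℂ] X)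

/-- The descent spectrum: the set of `λ` such that no `q` satisfies
`R((T-λ)^q) = R((T-λ)^{q+1})`, i.e. the descent of `T - λ` is infinite. -/
def descentSpectrum (T : X →L[ℂ] X) : Set ℂ :=
  {l | ∀ q : ℕ, LinearMap.range (((shiftOp T l) ^ q : X →L[ℂ] X) : X →ₗ[ℂ] X) ≠ LinearMap.range (((shiftOp T l) ^ (q + 1) : X →L[ℂ] X) : X →ₗ[ℂ] X)}

/-- The quotient space `R(S^n) / R(S^{n+1})`. -/
abbrev rangeQuot (S : X →L[ℂ] X) (n : ℕ) : Type _ :=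
  ↥(LinearMap.range ((S ^ n : X →L[ℂ] X) : X →ₗ[ℂ] X)) ⧸
    (Submodule.comap (LinearMap.range ((S ^ n : X →L[ℂ] X) : X →ₗ[ℂ] X)).subtype (LinearMap.range ((S ^ (n + 1) : X →L[ℂ] X) : X →ₗ[ℂ] X)))

/-- The essential descent spectrum: the set of `λ` such that `c_n(T-λ) =
dim R((T-λ)^n)/R((T-λ)^{n+1})` is infinite for every `n`, i.e. `d_e(T-λ) = ∞`. -/
def essDescentSpectrum (T : X →L[ℂ] X) : Set ℂ :=
  {l | ∀ n : ℕ, ¬ FiniteDimensional ℂ (rangeQuot (shiftOp T l) n)}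



open Filter in
lemma prod_small {ω : ℕ → ℝ} (hωpos : ∀ n, 0 < ω n) (hωbdd : ∃ C : ℝ, ∀ n, ω n ≤ C)
    (hc : liminf (fun n : ℕ => (∏ i ∈ Finset.range n, ω i) ^ ((1 : ℝ) / n)) atTop = 0)
    {r ε : ℝ} (hr : 0 < r) (hε : 0 < ε) (N₀ : ℕ) :
    ∃ n : ℕ, N₀ ≤ n ∧ 1 ≤ n ∧ (∏ i ∈ Finset.range n, ω i) < ε * r ^ n := by
  set m : ℝ := min ε 1 / 2 with hm
  have hm0 : 0 < m := by positivity
  have hm1 : m ≤ 1 := by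
    have : min ε 1 ≤ 1 := min_le_right _ _
    simp only [hm]; linarith
  have hmε : m ≤ ε := by
    have : min ε 1 ≤ ε := min_le_left _ _
    simp only [hm]; linarith
  have hbdd : IsBoundedUnder (· ≥ ·) atTop
      (fun n : ℕ => (∏ i ∈ Finset.range n, ω i) ^ ((1 : ℝ) / n)) :=
    isBoundedUnder_of ⟨0, fun n => Real.rpow_nonneg
      (Finset.prod_nonneg fun i _ => (hωpos i).le) _⟩
  have hlt : liminf (fun n : ℕ => (∏ i ∈ Finset.range n, ω i) ^ ((1 : ℝ) / n)) atTop < r * m := by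
    rw [hc]; positivity
  obtain ⟨C, hC⟩ := hωbdd
  set C' : ℝ := max C 1 with hC'
  have hC'1 : 1 ≤ C' := le_max_right _ _
  have hC'0 : 0 < C' := lt_of_lt_of_le one_pos hC'1
  have hcob : IsCoboundedUnder (· ≥ ·) atTop
      (fun n : ℕ => (∏ i ∈ Finset.range n, ω i) ^ ((1 : ℝ) / n)) := by
    apply isCoboundedUnder_ge_of_le (x := C') atTop
    intro n
    have hP : (0:ℝ) ≤ ∏ i ∈ Finset.range n, ω i := Finset.prod_nonneg fun i _ => (hωpos i).le
    rcases Nat.eq_zero_or_pos n with h0 | h1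
    · subst h0; simpa using hC'1
    · have h1' : (∏ i ∈ Finset.range n, ω i) ≤ C' ^ n := by
        calc (∏ i ∈ Finset.range n, ω i) ≤ ∏ _i ∈ Finset.range n, C' := by
              apply Finset.prod_le_prod (fun i _ => (hωpos i).le)
              exact fun i _ => le_trans (hC i) (le_max_left _ _)
          _ = C' ^ n := by rw [Finset.prod_const, Finset.card_range]
      calc (∏ i ∈ Finset.range n, ω i) ^ ((1:ℝ)/n) ≤ (C' ^ n) ^ ((1:ℝ)/n) :=
            Real.rpow_le_rpow hP h1' (by positivity)
        _ = C' := by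
            rw [← Real.rpow_natCast C' n, ← Real.rpow_mul hC'0.le]
            have hne : (n:ℝ) ≠ 0 := Nat.cast_ne_zero.mpr (by omega)
            rw [mul_one_div, div_self hne, Real.rpow_one]
  have hfreq := frequently_lt_of_liminf_lt hcob hlt
  obtain ⟨n, hn, hnlt⟩ := frequently_atTop.mp hfreq (max N₀ 1)
  have hn1 : 1 ≤ n := le_trans (le_max_right _ _) hn
  have hP : 0 ≤ ∏ i ∈ Finset.range n, ω i := Finset.prod_nonneg fun i _ => (hωpos i).le
  refine ⟨n, le_trans (le_max_left _ _) hn, hn1, ?_⟩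
  have hrec : ((∏ i ∈ Finset.range n, ω i) ^ ((1 : ℝ) / n)) ^ n = ∏ i ∈ Finset.range n, ω i := by
    rw [one_div, Real.rpow_inv_natCast_pow hP (by omega)]
  calc (∏ i ∈ Finset.range n, ω i)
      = ((∏ i ∈ Finset.range n, ω i) ^ ((1 : ℝ) / n)) ^ n := hrec.symm
    _ < (r * m) ^ n := by
        apply pow_lt_pow_left₀ hnlt (Real.rpow_nonneg hP _) (by omega)
    _ = r ^ n * m ^ n := mul_pow r m n
    _ ≤ r ^ n * m := by
        have := pow_le_of_le_one hm0.le hm1 (by omega : n ≠ 0)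
        exact mul_le_mul_of_nonneg_left this (pow_nonneg hr.le n)
    _ ≤ ε * r ^ n := by
        rw [mul_comm]
        exact mul_le_mul_of_nonneg_right hmε (pow_nonneg hr.le n)

open Filter in
lemma small_weights {ω : ℕ → ℝ} (hωpos : ∀ n, 0 < ω n) (hωbdd : ∃ C : ℝ, ∀ n, ω n ≤ C)
    (hc : liminf (fun n : ℕ => (∏ i ∈ Finset.range n, ω i) ^ ((1 : ℝ) / n)) atTop = 0)
    {δ : ℝ} (hδ : 0 < δ) (J : ℕ) : ∃ j : ℕ, J ≤ j ∧ ω j < δ := by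
  by_contra h
  push_neg at h
  set K : ℝ := ∏ i ∈ Finset.range J, ω i with hK
  have hK0 : 0 < K := Finset.prod_pos fun i _ => hωpos i
  obtain ⟨n, hnJ, hn1, hlt⟩ := prod_small hωpos hωbdd hc hδ
    (mul_pos hK0 (inv_pos.mpr (pow_pos hδ J))) J
  have hge : K * δ ^ (n - J) ≤ ∏ i ∈ Finset.range n, ω i := by
    rw [← Finset.prod_range_mul_prod_Ico ω hnJ]
    apply mul_le_mul_of_nonneg_left _ hK0.le
    calc δ ^ (n - J) = ∏ _i ∈ Finset.Ico J n, δ := by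
          rw [Finset.prod_const, Nat.card_Ico]
      _ ≤ ∏ i ∈ Finset.Ico J n, ω i := by
          apply Finset.prod_le_prod (fun i _ => hδ.le)
          intro i hi
          exact h i (Finset.mem_Ico.mp hi).1
  have heq : K * (δ ^ J)⁻¹ * δ ^ n = K * δ ^ (n - J) := by
    rw [mul_assoc]
    congr 1
    rw [inv_mul_eq_div, eq_comm, eq_div_iff (by positivity), ← pow_add]
    congr 1
    omega
  rw [heq] at hlt
  exact absurd hlt (not_lt.mpr hge)

lemma pow_inj {S : X →L[ℂ] X} (hS : Function.Injective S) (n : ℕ) :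
    Function.Injective (S ^ n : X →L[ℂ] X) := by
  induction n with
  | zero => intro a b h; simpa using h
  | succ n ih =>
      intro a b h
      rw [pow_succ, ContinuousLinearMap.mul_apply, ContinuousLinearMap.mul_apply] at h
      exact hS (ih h)

lemma surj_of_rangeEq {S : X →L[ℂ] X} (hS : Function.Injective S) {q : ℕ}
    (h : LinearMap.range ((S ^ q : X →L[ℂ] X) : X →ₗ[ℂ] X) = LinearMap.range ((S ^ (q + 1) : X →L[ℂ] X) : X →ₗ[ℂ] X)) :
    Function.Surjective S := by
  intro x
  have hx : (S ^ q) x ∈ LinearMap.range ((S ^ (q + 1) : X →L[ℂ] X) : X →ₗ[ℂ] X) := h ▸ LinearMap.mem_range_self _ x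
  obtain ⟨y, hy⟩ := hx
  rw [ContinuousLinearMap.coe_coe, pow_succ, ContinuousLinearMap.mul_apply] at hy
  exact ⟨y, pow_inj hS q hy⟩

lemma rangeEq_of_surj {S : X →L[ℂ] X} (hS : Function.Surjective S) (q : ℕ) :
    LinearMap.range ((S ^ q : X →L[ℂ] X) : X →ₗ[ℂ] X) = LinearMap.range ((S ^ (q + 1) : X →L[ℂ] X) : X →ₗ[ℂ] X) := by
  have : ∀ n : ℕ, LinearMap.range ((S ^ n : X →L[ℂ] X) : X →ₗ[ℂ] X) = ⊤ := by
    intro n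
    rw [LinearMap.range_eq_top]
    induction n with
    | zero => intro x; exact ⟨x, by simp⟩
    | succ n ih =>
        intro x
        obtain ⟨y, hy⟩ := ih x
        obtain ⟨z, hz⟩ := hS y
        exact ⟨z, by rw [ContinuousLinearMap.coe_coe] at hy ⊢; rw [pow_succ, ContinuousLinearMap.mul_apply, hz, hy]⟩
  rw [this, this]

lemma findim_rangeQuot_iff {S : X →L[ℂ] X} (hS : Function.Injective S) (n : ℕ) :
    FiniteDimensional ℂ (rangeQuot S n) ↔
      FiniteDimensional ℂ (X ⧸ LinearMap.range (S : X →ₗ[ℂ] X)) := by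
  -- build a linear equiv
  set K := Submodule.comap (LinearMap.range ((S ^ n : X →L[ℂ] X) : X →ₗ[ℂ] X)).subtype (LinearMap.range ((S ^ (n + 1) : X →L[ℂ] X) : X →ₗ[ℂ] X))
  let F : X →ₗ[ℂ] ↥(LinearMap.range ((S ^ n : X →L[ℂ] X) : X →ₗ[ℂ] X)) :=
    LinearMap.codRestrict _ (S ^ n : X →L[ℂ] X).toLinearMap
      (fun x => LinearMap.mem_range_self _ x)
  let q : X →ₗ[ℂ] rangeQuot S n := (Submodule.mkQ K).comp F
  have hqs : Function.Surjective q := by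
    intro y
    obtain ⟨⟨z, hz⟩, rfl⟩ := Submodule.mkQ_surjective K y
    obtain ⟨x, rfl⟩ := hz
    exact ⟨x, rfl⟩
  have hker : LinearMap.ker q = LinearMap.range (S : X →ₗ[ℂ] X) := by
    ext x
    constructor
    · intro hx
      have : F x ∈ K := by
        simpa [q, Submodule.Quotient.mk_eq_zero] using hx
      have hx2 : (S ^ n) x ∈ LinearMap.range ((S ^ (n + 1) : X →L[ℂ] X) : X →ₗ[ℂ] X) := this
      obtain ⟨y, hy⟩ := hx2
      rw [ContinuousLinearMap.coe_coe, pow_succ, ContinuousLinearMap.mul_apply] at hy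
      exact ⟨y, (pow_inj hS n hy.symm).symm⟩
    · rintro ⟨y, rfl⟩
      have : F (S y) ∈ K := by
        show (S ^ n) (S y) ∈ LinearMap.range ((S ^ (n + 1) : X →L[ℂ] X) : X →ₗ[ℂ] X)
        exact ⟨y, by rw [ContinuousLinearMap.coe_coe, pow_succ, ContinuousLinearMap.mul_apply]⟩
      simpa [q, Submodule.Quotient.mk_eq_zero] using this
  let e : (X ⧸ LinearMap.range (S : X →ₗ[ℂ] X)) ≃ₗ[ℂ] rangeQuot S n :=
    (Submodule.quotEquivOfEq _ _ hker.symm).trans (q.quotKerEquivOfSurjective hqs)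
  exact ⟨fun h => e.symm.finiteDimensional, fun h => e.finiteDimensional⟩


lemma surjective_of_dense_of_findim [CompleteSpace X] (S : X →L[ℂ] X)
    (hinj : Function.Injective S)
    (hdense : Dense (Set.range S))
    (hfd : FiniteDimensional ℂ (X ⧸ LinearMap.range (S : X →ₗ[ℂ] X))) :
    Function.Surjective S := by
  classical
  set R : Submodule ℂ X := LinearMap.range (S : X →ₗ[ℂ] X) with hR
  obtain ⟨W, hW⟩ := Submodule.exists_isCompl R
  have : FiniteDimensional ℂ W :=
    (Submodule.quotientEquivOfIsCompl R W hW).finiteDimensional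
  have : CompleteSpace W := FiniteDimensional.complete ℂ W
  let φ : X × W →L[ℂ] X :=
    S.comp (ContinuousLinearMap.fst ℂ X W) + W.subtypeL.comp (ContinuousLinearMap.snd ℂ X W)
  have hφ : ∀ x w, φ (x, w) = S x + (w : X) := fun x w => rfl
  have hker : LinearMap.ker (φ : X × W →ₗ[ℂ] X) = ⊥ := by
    rw [LinearMap.ker_eq_bot']
    rintro ⟨x, w⟩ h
    have h' : S x + (w : X) = 0 := h
    have hw : (w : X) ∈ R ⊓ W := by
      constructor
      · exact ⟨-x, by simp [map_neg, eq_neg_of_add_eq_zero_right h']⟩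
      · exact w.2
    rw [hW.inf_eq_bot] at hw
    have hw0 : (w : X) = 0 := hw
    have hx : S x = 0 := by rw [hw0, add_zero] at h'; exact h'
    have : x = 0 := hinj (by simpa using hx)
    simp [Prod.ext_iff, this, Subtype.ext_iff, hw0]
  have hrange : LinearMap.range (φ : X × W →ₗ[ℂ] X) = ⊤ := by
    rw [LinearMap.range_eq_top]
    intro x
    have hx : x ∈ R ⊔ W := by rw [hW.sup_eq_top]; trivial
    obtain ⟨r, hr, w, hww, hrw⟩ := Submodule.mem_sup.1 hx
    obtain ⟨u, hu⟩ := hr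
    refine ⟨(u, ⟨w, hww⟩), ?_⟩
    have : S u = r := hu
    simp [hφ, this, hrw]
  let e := ContinuousLinearEquiv.ofBijective φ hker hrange
  have hre : Set.range ⇑S = {x | ((e.symm x).2 : X) = 0} := by
    ext x
    constructor
    · rintro ⟨u, rfl⟩
      have : e (u, 0) = S u := by
        show φ (u, 0) = S u
        simp [hφ]
      show ((e.symm (S u)).2 : X) = 0
      rw [← this, ContinuousLinearEquiv.symm_apply_apply]
      rfl
    · intro hx
      have hx2 : e (e.symm x) = x := e.apply_symm_apply x
      refine ⟨(e.symm x).1, ?_⟩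
      have : φ (e.symm x) = x := hx2
      rw [hφ] at this
      have hx' : ((e.symm x).2 : X) = 0 := hx
      rw [hx', add_zero] at this
      exact this
  have hclosed : IsClosed (Set.range ⇑S) := by
    rw [hre]
    have : Continuous fun x => ((e.symm x).2 : X) :=
      continuous_subtype_val.comp (continuous_snd.comp e.symm.continuous)
    exact isClosed_eq this continuous_const
  have : Set.range ⇑S = Set.univ := by
    rw [← hclosed.closure_eq, hdense.closure_eq]
  exact Set.range_eq_univ.mp this



section ShiftLemmas
variable {p : ENNReal} [Fact (1 ≤ p)]
variable {T : lp (fun _ : ℕ => ℂ) p →L[ℂ] lp (fun _ : ℕ => ℂ) p} {ω : ℕ → ℝ}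

lemma shiftOp_coord (l : ℂ) (x : lp (fun _ : ℕ => ℂ) p) (j : ℕ) :
    (shiftOp T l x) j = (T x) j - l * x j := rfl

lemma single_coord (hq : p ≠ 0) (i j : ℕ) (c : ℂ) :
    (lp.single p i c : lp (fun _ : ℕ => ℂ) p) j = if j = i then c else 0 := by
  rcases eq_or_ne j i with rfl | h
  · rw [lp.single_apply_self, if_pos rfl]
  · rw [if_neg h]
    exact lp.single_apply_ne (E := fun _ : ℕ => ℂ) p i c h

open Filter in
lemma shiftOp_dense_range (hp : p ≠ ⊤)
    (hωpos : ∀ n, 0 < ω n) (hωbdd : ∃ C : ℝ, ∀ n, ω n ≤ C)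
    (hT : ∀ x : lp (fun _ : ℕ => ℂ) p,
      (T x) 0 = 0 ∧ ∀ n : ℕ, (T x) (n + 1) = (ω n : ℂ) * x n)
    (hc : liminf (fun n : ℕ => (∏ i ∈ Finset.range n, ω i) ^ ((1 : ℝ) / n)) atTop = 0)
    {l : ℂ} (hl : l ≠ 0) :
    Dense (Set.range (⇑(shiftOp T l))) := by
  classical
  set S := shiftOp T l with hS
  set M := (LinearMap.range (S : lp (fun _ : ℕ => ℂ) p →ₗ[ℂ] lp (fun _ : ℕ => ℂ) p)).topologicalClosure with hM
  set P : ℕ → ℝ := fun n => ∏ i ∈ Finset.range n, ω i with hPdef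
  have hPpos : ∀ n, 0 < P n := fun n => Finset.prod_pos fun i _ => hωpos i
  have hr : (0:ℝ) < ‖l‖ := norm_pos_iff.mpr hl
  set r := ‖l‖ with hrdef
  -- each single is in the closure M
  have hsingle1 : ∀ k : ℕ, (lp.single p k 1 : lp (fun _ : ℕ => ℂ) p) ∈ M := by
    intro k
    have : (lp.single p k 1 : lp (fun _ : ℕ => ℂ) p) ∈
        closure (Set.range (⇑S)) := by
      rw [Metric.mem_closure_iff]
      intro ε hε
      obtain ⟨n, hnk, hn1, hPn⟩ := prod_small hωpos hωbdd hc hr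
        (div_pos (mul_pos hε (hPpos k)) (pow_pos hr k)) (k + 1)
      -- coefficients
      set a : ℕ → ℂ := fun m => -(((P (k + m) / P k : ℝ)) : ℂ) / l ^ (m + 1) with ha
      set y : lp (fun _ : ℕ => ℂ) p :=
        ∑ m ∈ Finset.range (n - k), lp.single p (k + m) (a m) with hy
      set b : ℂ := (ω (n - 1) : ℂ) * a (n - 1 - k) with hb
      have hq0 : p ≠ 0 := by
        intro h
        have := Fact.out (p := 1 ≤ p)
        rw [h] at this
        simp at this
      -- coordinates of y
      have hyj : ∀ j : ℕ, (y : ∀ _ : ℕ, ℂ) j = if k ≤ j ∧ j < n then a (j - k) else 0 := by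
        intro j
        have hcoe : (y : ∀ _ : ℕ, ℂ) j =
            ∑ m ∈ Finset.range (n - k), (lp.single p (k + m) (a m) : lp (fun _ : ℕ => ℂ) p) j := by
          rw [hy, lp.coeFn_sum, Finset.sum_apply]
        rw [hcoe]
        by_cases hj : k ≤ j ∧ j < n
        · rw [if_pos hj, Finset.sum_eq_single (j - k)]
          · rw [single_coord hq0, if_pos (by omega)]
          · intro m hm hne
            rw [single_coord hq0, if_neg (by omega)]
          · intro hmem
            exfalso
            apply hmem
            rw [Finset.mem_range]
            omega
        · rw [if_neg hj]
          apply Finset.sum_eq_zero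
          intro m hm
          rw [Finset.mem_range] at hm
          rw [single_coord hq0, if_neg (by omega)]
      -- the recurrence
      have habc : ∀ m : ℕ, (ω (k + m) : ℂ) * a m = l * a (m + 1) := by
        intro m
        have hPs : P (k + m + 1) = P (k + m) * ω (k + m) := Finset.prod_range_succ ω (k + m)
        rw [ha]
        simp only
        have hPk : ((P k : ℝ) : ℂ) ≠ 0 := by
          simp only [ne_eq, Complex.ofReal_eq_zero]
          exact (hPpos k).ne'
        have hlp : l ^ (m + 1) ≠ 0 := pow_ne_zero _ hl
        have hlp2 : l ^ (m + 2) ≠ 0 := pow_ne_zero _ hl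
        rw [show k + (m + 1) = k + m + 1 by ring, hPs]
        push_cast
        field_simp
        ring
      -- computing S y
      have hSy : S y = lp.single p k 1 + lp.single p n b := by
        apply lp.ext
        funext j
        have hrhs : ((lp.single p k 1 + lp.single p n b : lp (fun _ : ℕ => ℂ) p) : ∀ _ : ℕ, ℂ) j
            = (if j = k then 1 else 0) + (if j = n then b else 0) := by
          rw [lp.coeFn_add, Pi.add_apply, single_coord hq0, single_coord hq0]
        rw [hrhs]
        rw [show ((S y : lp (fun _ : ℕ => ℂ) p) : ∀ _ : ℕ, ℂ) j = (T y) j - l * (y : ∀ _ : ℕ, ℂ) j from rfl]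
        rcases j with _ | i
        · -- j = 0
          rw [(hT y).1, hyj 0]
          by_cases hk : k = 0
          · subst hk
            rw [if_pos (by omega), if_pos rfl, if_neg (by omega)]
            have : a (0 - 0) = -1 / l := by
              rw [ha]
              simp [div_self (hPpos 0).ne']
            rw [this]
            field_simp
            norm_num
          · rw [if_neg (by omega), if_neg (by omega), if_neg (by omega)]
            ring
        · -- j = i+1
          rw [(hT y).2 i, hyj i, hyj (i + 1)]
          by_cases h1 : i + 1 < k
          · rw [if_neg (by omega), if_neg (by omega), if_neg (by omega), if_neg (by omega)]
            ring
          · by_cases h2 : i + 1 = k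
            · rw [if_neg (by omega), if_pos (by omega), if_pos (by omega), if_neg (by omega)]
              have : a (i + 1 - k) = -1 / l := by
                rw [ha]
                simp only [show i + 1 - k = 0 by omega]
                simp [div_self (hPpos k).ne']
              rw [this]
              field_simp
              norm_num
            · by_cases h3 : i + 1 < n
              · rw [if_pos (by omega), if_pos (by omega), if_neg (by omega), if_neg (by omega)]
                have := habc (i - k)
                rw [show k + (i - k) = i by omega] at this
                rw [show i + 1 - k = (i - k) + 1 by omega]
                rw [this]
                ring
              · by_cases h4 : i + 1 = n
                · rw [if_pos (by omega), if_neg (by omega), if_neg (by omega), if_pos (by omega)]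
                  rw [hb, show n - 1 = i by omega]
                  ring
                · rw [if_neg (by omega), if_neg (by omega), if_neg (by omega), if_neg (by omega)]
                  ring
      -- the distance estimate
      refine ⟨S y, ⟨y, rfl⟩, ?_⟩
      rw [dist_eq_norm, hSy]
      have : (lp.single p k 1 : lp (fun _ : ℕ => ℂ) p) - (lp.single p k 1 + lp.single p n b)
          = -(lp.single p n b) := by abel
      rw [this, norm_neg]
      have hpt : 0 < p.toReal := ENNReal.toReal_pos hq0 hp
      have hnrm : ‖(lp.single p n b : lp (fun _ : ℕ => ℂ) p)‖ = ‖b‖ :=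
        lp.norm_single (E := fun _ : ℕ => ℂ) (p := p) (pos_iff_ne_zero.mpr hq0) n b
      rw [hnrm]
      -- compute ‖b‖
      have hab : ‖a (n - 1 - k)‖ = (P (n - 1) / P k) / r ^ (n - k) := by
        rw [ha]
        simp only
        rw [norm_div, norm_neg, norm_pow]
        rw [show k + (n - 1 - k) = n - 1 by omega, show n - 1 - k + 1 = n - k by omega]
        rw [Complex.norm_real, Real.norm_of_nonneg (div_pos (hPpos (n-1)) (hPpos k)).le]
      have hbnorm : ‖b‖ = P n / (P k * r ^ (n - k)) := by
        rw [hb, norm_mul, Complex.norm_real, Real.norm_of_nonneg (hωpos (n-1)).le, hab]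
        have hPn' : P n = P (n - 1) * ω (n - 1) := by
          rw [hPdef]
          simp only
          rw [show n = (n-1) + 1 by omega, Finset.prod_range_succ]
          congr 1 <;> omega
        rw [hPn']
        field_simp
      rw [hbnorm]
      rw [div_lt_iff₀ (mul_pos (hPpos k) (pow_pos hr (n-k)))]
      have hrn : r ^ n = r ^ k * r ^ (n - k) := by
        rw [← pow_add]
        congr 1
        omega
      rw [hrn] at hPn
      calc P n < ε * P k / r ^ k * (r ^ k * r ^ (n - k)) := hPn
        _ = ε * (P k * r ^ (n - k)) := by field_simp
    exact this
  have hsingle : ∀ (k : ℕ) (c : ℂ), (lp.single p k c : lp (fun _ : ℕ => ℂ) p) ∈ M := by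
    intro k c
    have : (lp.single p k c : lp (fun _ : ℕ => ℂ) p) = c • lp.single p k 1 := by
      rw [← lp.single_smul]
      norm_num
    rw [this]
    exact M.smul_mem c (hsingle1 k)
  have htop : ∀ x : lp (fun _ : ℕ => ℂ) p, x ∈ M := by
    intro x
    have hsum := lp.hasSum_single hp x
    refine (Submodule.isClosed_topologicalClosure _).mem_of_tendsto hsum ?_
    exact Filter.Eventually.of_forall
      (fun A => Submodule.sum_mem M (fun i _ => hsingle i (x i)))
  rw [dense_iff_closure_eq]
  apply Set.eq_univ_of_forall
  intro x
  exact htop x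


lemma shiftOp_inj (hωpos : ∀ n, 0 < ω n)
    (hT : ∀ x : lp (fun _ : ℕ => ℂ) p,
      (T x) 0 = 0 ∧ ∀ n : ℕ, (T x) (n + 1) = (ω n : ℂ) * x n)
    (l : ℂ) : Function.Injective (shiftOp T l) := by
  have key : ∀ x : lp (fun _ : ℕ => ℂ) p, shiftOp T l x = 0 → x = 0 := by
    intro x hx
    have hco : ∀ j, (T x) j = l * x j := by
      intro j
      have h := congrFun (congrArg (Subtype.val) hx) j
      rw [shiftOp_coord] at h
      have h0 : ((0 : lp (fun _ : ℕ => ℂ) p) : ∀ _ : ℕ, ℂ) j = 0 := rfl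
      rw [h0, sub_eq_zero] at h
      exact h
    have hzero : ∀ j, x j = 0 := by
      rcases eq_or_ne l 0 with rfl | hl
      · intro j
        have := hco (j + 1)
        rw [(hT x).2 j, zero_mul] at this
        have hω : (ω j : ℂ) ≠ 0 := by
          simp only [ne_eq, Complex.ofReal_eq_zero]
          exact (hωpos j).ne'
        exact (mul_eq_zero.mp this).resolve_left hω
      · intro j
        induction j with
        | zero =>
            have := hco 0
            rw [(hT x).1] at this
            exact (mul_eq_zero.mp this.symm).resolve_left hl
        | succ n ih =>
            have := hco (n + 1)
            rw [(hT x).2 n, ih, mul_zero] at this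
            exact (mul_eq_zero.mp this.symm).resolve_left hl
    apply lp.ext
    funext j
    exact hzero j
  intro a b hab
  have h2 : shiftOp T l (a - b) = 0 := by rw [map_sub, hab, sub_self]
  exact sub_eq_zero.mp (key _ h2)


open Filter in
lemma not_findim_coker (hp : p ≠ ⊤)
    (hωpos : ∀ n, 0 < ω n) (hωbdd : ∃ C : ℝ, ∀ n, ω n ≤ C)
    (hT : ∀ x : lp (fun _ : ℕ => ℂ) p,
      (T x) 0 = 0 ∧ ∀ n : ℕ, (T x) (n + 1) = (ω n : ℂ) * x n)
    (hc : liminf (fun n : ℕ => (∏ i ∈ Finset.range n, ω i) ^ ((1 : ℝ) / n)) atTop = 0) :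
    ¬ FiniteDimensional ℂ ((lp (fun _ : ℕ => ℂ) p) ⧸
        LinearMap.range ((T : lp (fun _ : ℕ => ℂ) p →ₗ[ℂ] lp (fun _ : ℕ => ℂ) p))) := by
  classical
  intro hfd
  set R := LinearMap.range ((T : lp (fun _ : ℕ => ℂ) p →ₗ[ℂ] lp (fun _ : ℕ => ℂ) p)) with hR
  have hq0 : p ≠ 0 := by
    intro h
    have := Fact.out (p := 1 ≤ p)
    rw [h] at this
    simp at this
  have hqt : 0 < p.toReal := ENNReal.toReal_pos hq0 hp
  set q := p.toReal with hqdef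
  -- choose a strictly monotone sequence of indices with tiny weights
  have hsw : ∀ t J : ℕ, ∃ j, J ≤ j ∧ ω j < (1/4 : ℝ)^t :=
    fun t J => small_weights hωpos hωbdd hc (by positivity) J
  choose g hg1 hg2 using hsw
  set m : ℕ → ℕ := fun t => Nat.rec (g 0 0) (fun t prev => g (t+1) (prev+1)) t with hm
  have hmsucc : ∀ t, m (t+1) = g (t+1) (m t + 1) := fun t => rfl
  have hmono : StrictMono m := by
    apply strictMono_nat_of_lt_succ
    intro t
    rw [hmsucc]
    exact lt_of_lt_of_le (Nat.lt_succ_self _) (hg1 (t+1) (m t + 1))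
  have hmω : ∀ t, ω (m t) < (1/4 : ℝ)^t := by
    intro t
    cases t with
    | zero => exact hg2 0 0
    | succ t => rw [hmsucc]; exact hg2 (t+1) (m t + 1)
  set d := Module.finrank ℂ ((lp (fun _ : ℕ => ℂ) p) ⧸ R) with hd
  set K := d + 1 with hK
  have hKpos : 0 < K := Nat.succ_pos d
  -- the index maps
  set u : Fin K → ℕ → ℕ := fun i s => m ((i : ℕ) + s * K) + 1 with hu
  have huinj : ∀ i : Fin K, Function.Injective (u i) := by
    intro i s s' h
    simp only [hu] at h
    have h1 : m ((i:ℕ) + s * K) = m ((i:ℕ) + s' * K) := by omega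
    have h2 := hmono.injective h1
    exact Nat.eq_of_mul_eq_mul_right hKpos (by omega)
  have hucross : ∀ (i i' : Fin K) (s s' : ℕ), u i s = u i' s' → i = i' ∧ s = s' := by
    intro i i' s s' h
    simp only [hu] at h
    have h2 : (i:ℕ) + s * K = (i':ℕ) + s' * K := hmono.injective (by omega)
    have hi : (i:ℕ) = (i':ℕ) := by
      have e1 : ((i:ℕ) + s * K) % K = (i:ℕ) % K := Nat.add_mul_mod_self_right _ _ _
      have e2 : ((i':ℕ) + s' * K) % K = (i':ℕ) % K := Nat.add_mul_mod_self_right _ _ _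
      rw [Nat.mod_eq_of_lt i.isLt] at e1
      rw [Nat.mod_eq_of_lt i'.isLt] at e2
      rw [h2] at e1
      rw [e2] at e1
      omega
    refine ⟨Fin.ext hi, ?_⟩
    have : s * K = s' * K := by omega
    exact Nat.eq_of_mul_eq_mul_right hKpos this
  -- the coordinate functions
  set gf : Fin K → ℕ → ℂ := fun i =>
    Function.extend (u i) (fun s => (((1/2 : ℝ)^((i:ℕ) + s * K) : ℝ) : ℂ)) 0 with hgf
  have hgf_at : ∀ (i : Fin K) (s : ℕ), gf i (u i s) = (((1/2 : ℝ)^((i:ℕ) + s * K) : ℝ) : ℂ) :=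
    fun i s => (huinj i).extend_apply _ _ s
  have hgf_off : ∀ (i : Fin K) (j : ℕ), (¬ ∃ s, u i s = j) → gf i j = 0 := by
    intro i j hj
    rw [hgf]
    simp only
    rw [Function.extend_apply' _ _ _ hj]
    rfl
  -- membership in lp
  have hmem : ∀ i : Fin K, Memℓp (gf i) p := by
    intro i
    apply memℓp_gen
    have hvanish : ∀ j ∉ Set.range (u i), ‖gf i j‖ ^ q = 0 := by
      intro j hj
      rw [hgf_off i j (by simpa [Set.mem_range] using hj)]
      simp only [norm_zero]
      exact Real.zero_rpow hqt.ne'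
    rw [← Function.Injective.summable_iff (huinj i) hvanish]
    have hterm : ∀ s : ℕ, ‖gf i (u i s)‖ ^ q ≤ ((1/2 : ℝ) ^ q) ^ s := by
      intro s
      rw [hgf_at]
      have h1 : ‖(((1/2 : ℝ)^((i:ℕ) + s * K) : ℝ) : ℂ)‖ = (1/2 : ℝ)^((i:ℕ) + s * K) := by
        rw [Complex.norm_real, Real.norm_of_nonneg (by positivity)]
      rw [h1]
      have h2 : (1/2 : ℝ)^((i:ℕ) + s * K) ≤ (1/2 : ℝ)^s := by
        apply pow_le_pow_of_le_one (by norm_num) (by norm_num)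
        have : 1 * s ≤ s * K := by
          calc 1 * s = s := one_mul s
          _ ≤ s * K := Nat.le_mul_of_pos_right s hKpos
        omega
      calc ((1/2 : ℝ)^((i:ℕ) + s * K)) ^ q ≤ ((1/2 : ℝ)^s) ^ q :=
            Real.rpow_le_rpow (by positivity) h2 hqt.le
        _ = ((1/2 : ℝ) ^ q) ^ s := by
            rw [← Real.rpow_natCast (1/2 : ℝ) s, ← Real.rpow_mul (by norm_num),
              mul_comm, Real.rpow_mul (by norm_num), Real.rpow_natCast]
    apply Summable.of_nonneg_of_le (fun s => Real.rpow_nonneg (norm_nonneg _) q) hterm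
    apply summable_geometric_of_lt_one (Real.rpow_nonneg (by norm_num) q)
    exact Real.rpow_lt_one (by norm_num) (by norm_num) hqt
  set Y : Fin K → lp (fun _ : ℕ => ℂ) p := fun i => ⟨gf i, hmem i⟩ with hY
  have hYcoord : ∀ (i : Fin K) (j : ℕ), (Y i : ∀ _ : ℕ, ℂ) j = gf i j := fun i j => rfl
  -- linear independence of the classes
  have hli : LinearIndependent ℂ (fun i : Fin K => R.mkQ (Y i)) := by
    rw [Fintype.linearIndependent_iff]
    intro cc hcc i0
    by_contra hne
    have hz : (∑ i, cc i • Y i) ∈ R := by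
      rw [← Submodule.Quotient.mk_eq_zero]
      have : (Submodule.Quotient.mk (∑ i, cc i • Y i) : (lp (fun _ : ℕ => ℂ) p) ⧸ R) = ∑ i, cc i • R.mkQ (Y i) := by
        rw [← Submodule.mkQ_apply, map_sum]
        refine Finset.sum_congr rfl fun i _ => ?_
        rw [map_smul]
      rw [this, hcc]
    obtain ⟨x, hx⟩ := hz
    -- coordinates of the combination along u i0
    have hzc : ∀ s : ℕ, ((∑ i, cc i • Y i : lp (fun _ : ℕ => ℂ) p) : ∀ _ : ℕ, ℂ) (u i0 s)
        = cc i0 * (((1/2 : ℝ)^((i0:ℕ) + s * K) : ℝ) : ℂ) := by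
      intro s
      rw [lp.coeFn_sum, Finset.sum_apply]
      rw [Finset.sum_eq_single i0]
      · rw [lp.coeFn_smul, Pi.smul_apply, hYcoord, hgf_at, smul_eq_mul]
      · intro i _ hii
        rw [lp.coeFn_smul, Pi.smul_apply, hYcoord]
        rw [hgf_off i _ (fun ⟨s', hs'⟩ => hii (hucross i i0 s' s hs').1)]
        simp
      · intro h
        exact absurd (Finset.mem_univ i0) h
    -- pick s with 2^s large
    obtain ⟨s, hs⟩ := pow_unbounded_of_one_lt (‖x‖ / ‖cc i0‖) (by norm_num : (1:ℝ) < 2)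
    set t := (i0 : ℕ) + s * K with ht
    have hts : s ≤ t := by
      have : 1 * s ≤ s * K := by
        calc 1 * s = s := one_mul s
        _ ≤ s * K := Nat.le_mul_of_pos_right s hKpos
      omega
    have hcc0 : (0:ℝ) < ‖cc i0‖ := norm_pos_iff.mpr hne
    -- the coordinate of x at m t
    have hxeq : (ω (m t) : ℂ) * x (m t) = cc i0 * (((1/2 : ℝ)^t : ℝ) : ℂ) := by
      have h1 : (T x) (u i0 s) = cc i0 * (((1/2 : ℝ)^t : ℝ) : ℂ) := by
        have : T x = (∑ i, cc i • Y i : lp (fun _ : ℕ => ℂ) p) := hx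
        rw [this, hzc s]
      rw [show u i0 s = m t + 1 from rfl] at h1
      rw [(hT x).2 (m t)] at h1
      exact h1
    have hω0 : (0:ℝ) < ω (m t) := hωpos (m t)
    have hxnorm : ‖x (m t)‖ = ‖cc i0‖ * (1/2 : ℝ)^t / ω (m t) := by
      have hωC : ((ω (m t) : ℝ) : ℂ) ≠ 0 := by
        simp only [ne_eq, Complex.ofReal_eq_zero]
        exact hω0.ne'
      have : x (m t) = cc i0 * (((1/2 : ℝ)^t : ℝ) : ℂ) / (ω (m t) : ℂ) := by
        rw [eq_div_iff hωC, ← hxeq]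
        ring
      rw [this, norm_div, norm_mul, Complex.norm_real, Complex.norm_real,
        Real.norm_of_nonneg (by positivity : (0:ℝ) ≤ (1/2:ℝ)^t),
        Real.norm_of_nonneg hω0.le]
    have hbig : ‖cc i0‖ * (2 : ℝ)^t ≤ ‖x (m t)‖ := by
      rw [hxnorm]
      rw [le_div_iff₀ hω0]
      calc ‖cc i0‖ * (2:ℝ)^t * ω (m t) ≤ ‖cc i0‖ * (2:ℝ)^t * (1/4 : ℝ)^t :=
            mul_le_mul_of_nonneg_left (hmω t).le (by positivity)
        _ = ‖cc i0‖ * (1/2 : ℝ)^t := by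
            rw [mul_assoc, ← mul_pow]
            norm_num
    have hle : ‖x (m t)‖ ≤ ‖x‖ := lp.norm_apply_le_norm hq0 x (m t)
    have : ‖x‖ < ‖cc i0‖ * (2:ℝ)^t := by
      rw [div_lt_iff₀ hcc0] at hs
      calc ‖x‖ < 2 ^ s * ‖cc i0‖ := hs
        _ = ‖cc i0‖ * 2 ^ s := mul_comm _ _
        _ ≤ ‖cc i0‖ * 2 ^ t := by
            apply mul_le_mul_of_nonneg_left _ hcc0.le
            exact pow_le_pow_right₀ (by norm_num) hts
    linarith
  have hcard := hli.fintype_card_le_finrank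
  rw [Fintype.card_fin, ← hd] at hcard
  omega


end ShiftLemmas

open Filter in
/-- Let `T` be a unilateral weighted right shift on `ℓ^p(ℕ)`,
`1 ≤ p < ∞`, with bounded positive weight sequence `(ω_n)`, i.e.
`T(x₁, x₂, …) = (0, ω₁x₁, ω₂x₂, …)`. If
`c(T) = liminf_n (ω₁⋯ω_n)^{1/n} = 0`, then `σ_desc(T) = σ_desc^e(T)`. -/
theorem weightedShift_descentSpectrum_eq_essDescentSpectrum
    (p : ENNReal) [Fact (1 ≤ p)] (hp : p ≠ ⊤)
    (ω : ℕ → ℝ) (hωpos : ∀ n, 0 < ω n) (hωbdd : ∃ C : ℝ, ∀ n, ω n ≤ C)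
    (T : lp (fun _ : ℕ => ℂ) p →L[ℂ] lp (fun _ : ℕ => ℂ) p)
    (hT : ∀ x : lp (fun _ : ℕ => ℂ) p,
      (T x) 0 = 0 ∧ ∀ n : ℕ, (T x) (n + 1) = (ω n : ℂ) * x n)
    (hc : liminf (fun n : ℕ => (∏ i ∈ Finset.range n, ω i) ^ ((1 : ℝ) / n)) atTop = 0) :
    descentSpectrum T = essDescentSpectrum T := by
  ext l
  simp only [descentSpectrum, essDescentSpectrum, Set.mem_setOf_eq]
  rw [← not_iff_not]
  push_neg
  have hinj := shiftOp_inj hωpos hT l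
  constructor
  · rintro ⟨q, hq⟩
    have hsurj := surj_of_rangeEq hinj hq
    refine ⟨0, ?_⟩
    rw [findim_rangeQuot_iff hinj 0]
    have htop : LinearMap.range ((shiftOp T l : lp (fun _ : ℕ => ℂ) p →ₗ[ℂ]
        lp (fun _ : ℕ => ℂ) p)) = ⊤ := LinearMap.range_eq_top.mpr hsurj
    rw [htop]
    haveI : Subsingleton ((lp (fun _ : ℕ => ℂ) p) ⧸
        (⊤ : Submodule ℂ (lp (fun _ : ℕ => ℂ) p))) :=
      Submodule.Quotient.subsingleton_iff.mpr rfl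
    infer_instance
  · rintro ⟨n, hn⟩
    have hfd := (findim_rangeQuot_iff hinj n).mp hn
    have hsurj : Function.Surjective (shiftOp T l) := by
      rcases eq_or_ne l 0 with rfl | hl
      · exfalso
        have h0 : shiftOp T 0 = T := by simp [shiftOp]
        rw [h0] at hfd
        exact not_findim_coker hp hωpos hωbdd hT hc hfd
      · exact surjective_of_dense_of_findim _ hinj
          (shiftOp_dense_range hp hωpos hωbdd hT hc hl) hfd
    exact ⟨0, rangeEq_of_surj hsurj 0⟩
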